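/- For every nonzero ordinal α, the interval algebra Int(α) of the linear order of ordinals below α is superatomic. -/

import Mathlib

open Ordinal

/-- The collection of all finite unions of half-open intervals `[a,b)` and final
segments `[a,∞)` in a linear order `L`: the carrier of the interval algebra `Int(L)`,
viewed as a Boolean subalgebra of the powerset of `L`. -/
def IntAlgSets (L : Type*) [LinearOrder L] : Set (Set L) :=
  {S | ∃ I : Set (Set L), I.Finite ∧
    (∀ A ∈ I, (∃ a b : L, A = Set.Ico a b) ∨ ∃ a : L, A = Set.Ici a) ∧ S = ⋃₀ I}

/-- For every nonzero ordinal `α`, the interval algebra `Int(α)` of the linear order of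
ordinals below `α` is superatomic: every Boolean subalgebra `T` of `Int(α)` is atomic,
i.e. every nonempty member of `T` contains an atom of `T`. -/
theorem intervalAlgebra_superatomic (α : Ordinal) (hα : α ≠ 0)
    (T : Set (Set ↥(Set.Iio α)))
    (hsub : T ⊆ IntAlgSets ↥(Set.Iio α))
    (hbot : ∅ ∈ T) (htop : Set.univ ∈ T)
    (hunion : ∀ S ∈ T, ∀ S' ∈ T, S ∪ S' ∈ T)
    (hinter : ∀ S ∈ T, ∀ S' ∈ T, S ∩ S' ∈ T)
    (hcompl : ∀ S ∈ T, Sᶜ ∈ T) :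
    ∀ S ∈ T, S ≠ ∅ →
      ∃ A ∈ T, A ⊆ S ∧ A ≠ ∅ ∧ ∀ B ∈ T, B ⊆ A → B = ∅ ∨ B = A := by
  classical
  intro S hS hSne
  have hSne' : S.Nonempty := Set.nonempty_iff_ne_empty.mpr hSne
  -- Γ : ordinals bounding some nonempty T-subset of S
  set Γ : Set Ordinal :=
    {γ | ∃ B, B ∈ T ∧ B ⊆ S ∧ B.Nonempty ∧ ∀ x ∈ B, (x : Ordinal) < γ} with hΓdef
  have hΓne : Γ.Nonempty := ⟨α, S, hS, subset_rfl, hSne', fun x _ => x.2⟩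
  set γ : Ordinal := sInf Γ with hγdef
  obtain ⟨B₀, hB₀T, hB₀S, hB₀ne, hB₀γ⟩ := csInf_mem hΓne
  have hγpos : 0 < γ := by
    rcases hB₀ne with ⟨x, hx⟩
    exact lt_of_le_of_lt (zero_le (a := ((x : ↥(Set.Iio α)) : Ordinal))) (hB₀γ x hx)
  -- every nonempty T-subset of B₀ is cofinal below γ
  have hcof : ∀ B, B ∈ T → B ⊆ B₀ → B.Nonempty →
      ∀ δ, δ < γ → ∃ x ∈ B, δ ≤ (x : Ordinal) := by
    intro B hBT hBB hBne δ hδ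
    by_contra h
    push_neg at h
    have hmem : δ ∈ Γ :=
      ⟨B, hBT, hBB.trans hB₀S, hBne, fun x hx => h x hx⟩
    exact absurd (csInf_le' hmem) (not_le.mpr hδ)
  -- finite unions of bounded sets are bounded
  have hfinbd : ∀ I : Set (Set ↥(Set.Iio α)), I.Finite →
      (∀ A ∈ I, ∃ δ, δ < γ ∧ ∀ z ∈ A, (z : Ordinal) < δ) →
      ∃ δ, δ < γ ∧ ∀ z ∈ ⋃₀ I, (z : Ordinal) < δ := by
    intro I hI
    refine @Set.Finite.induction_on _
      (fun (J : Set (Set ↥(Set.Iio α))) _ =>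
        (∀ A ∈ J, ∃ δ, δ < γ ∧ ∀ z ∈ A, (z : Ordinal) < δ) →
        ∃ δ, δ < γ ∧ ∀ z ∈ Set.sUnion J, (z : Ordinal) < δ) I hI ?_ ?_
    · intro _
      exact ⟨0, hγpos, fun z hz => absurd hz (by simp)⟩
    · intro A I' _ _ ih h
      obtain ⟨δA, hδA, hδA'⟩ := h A (Set.mem_insert _ _)
      obtain ⟨δ', hδ', hδ''⟩ := ih (fun A' hA' => h A' (Set.mem_insert_of_mem _ hA'))
      refine ⟨max δA δ', max_lt hδA hδ', ?_⟩
      intro z hz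
      rw [Set.sUnion_insert] at hz
      rcases hz with hz | hz
      · exact lt_of_lt_of_le (hδA' z hz) (le_max_left _ _)
      · exact lt_of_lt_of_le (hδ'' z hz) (le_max_right _ _)
  -- every nonempty T-subset of B₀ contains a tail {z : a ≤ z < γ}
  have htail : ∀ B, B ∈ T → B ⊆ B₀ → B.Nonempty →
      ∃ a : Ordinal, a < γ ∧
        ∀ z : ↥(Set.Iio α), a ≤ (z : Ordinal) → (z : Ordinal) < γ → z ∈ B := by
    intro B hBT hBB hBne
    obtain ⟨I, hIfin, hIint, hIU⟩ := hsub hBT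
    have hbd : ∀ x ∈ B, (x : Ordinal) < γ := fun x hx => hB₀γ x (hBB hx)
    by_cases hpos : ∃ A ∈ I, ∃ a : Ordinal, a < γ ∧
        ∀ z : ↥(Set.Iio α), a ≤ (z : Ordinal) → (z : Ordinal) < γ → z ∈ A
    · obtain ⟨A, hAI, a, haγ, ha⟩ := hpos
      exact ⟨a, haγ, fun z hz1 hz2 => by
        rw [hIU]; exact ⟨A, hAI, ha z hz1 hz2⟩⟩
    · push_neg at hpos
      exfalso
      -- every interval in I is then bounded strictly below γ
      have hball : ∀ A ∈ I, ∃ δ, δ < γ ∧ ∀ z ∈ A, (z : Ordinal) < δ := by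
        intro A hAI
        have hAB : A ⊆ B := by
          intro z hz; rw [hIU]; exact ⟨A, hAI, hz⟩
        rcases hIint A hAI with ⟨a, b, rfl⟩ | ⟨a, rfl⟩
        · by_cases hb : (b : Ordinal) ≤ γ
          · -- bounded by b
            by_cases hbγ : (b : Ordinal) < γ
            · exact ⟨b, hbγ, fun z hz => Subtype.coe_lt_coe.mpr hz.2⟩
            · -- b = γ : then Ico a b would contain the tail from a, unless empty
              have hbγ' : (b : Ordinal) = γ := le_antisymm hb (not_lt.mp hbγ)
              by_cases haγ : (a : Ordinal) < γ
              · exact absurd (⟨a, haγ, fun z hz1 hz2 => by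
                  exact ⟨Subtype.coe_le_coe.mp hz1,
                    Subtype.coe_lt_coe.mp (by rw [hbγ']; exact hz2)⟩⟩ :
                    ∃ a' : Ordinal, a' < γ ∧ ∀ z : ↥(Set.Iio α),
                      a' ≤ (z : Ordinal) → (z : Ordinal) < γ → z ∈ Set.Ico a b)
                  (by simpa using hpos _ hAI)
              · -- a ≥ γ : interval is empty (all its elements are < γ yet ≥ a)
                refine ⟨0, hγpos, fun z hz => ?_⟩
                have h1 : (z : Ordinal) < γ := hbd z (hAB hz)
                have h2 : (a : Ordinal) ≤ (z : Ordinal) := Subtype.coe_le_coe.mpr hz.1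
                exact (haγ (lt_of_le_of_lt h2 h1)).elim
          · -- b > γ : Ico a b contains the tail from a (a < γ since a ∈ A or A empty)
            push_neg at hb
            by_cases haγ : (a : Ordinal) < γ
            · exact absurd (⟨a, haγ, fun z hz1 hz2 =>
                ⟨Subtype.coe_le_coe.mp hz1,
                  Subtype.coe_lt_coe.mp (lt_of_lt_of_le hz2 hb.le)⟩⟩ :
                  ∃ a' : Ordinal, a' < γ ∧ ∀ z : ↥(Set.Iio α),
                    a' ≤ (z : Ordinal) → (z : Ordinal) < γ → z ∈ Set.Ico a b)
                (by simpa using hpos _ hAI)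
            · refine ⟨0, hγpos, fun z hz => ?_⟩
              have h1 : (z : Ordinal) < γ := hbd z (hAB hz)
              have h2 : (a : Ordinal) ≤ (z : Ordinal) := Subtype.coe_le_coe.mpr hz.1
              exact (haγ (lt_of_le_of_lt h2 h1)).elim
        · -- final segment Ici a : always contains the tail from a
          have haB : a ∈ B := hAB (Set.self_mem_Ici)
          exact absurd (⟨(a : Ordinal), hbd a haB, fun z hz1 _ =>
            Subtype.coe_le_coe.mp hz1⟩ :
            ∃ a' : Ordinal, a' < γ ∧ ∀ z : ↥(Set.Iio α),
              a' ≤ (z : Ordinal) → (z : Ordinal) < γ → z ∈ Set.Ici a)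
            (by simpa using hpos _ hAI)
      obtain ⟨δ, hδγ, hδ⟩ := hfinbd I hIfin hball
      obtain ⟨x, hxB, hx⟩ := hcof B hBT hBB hBne δ hδγ
      rw [hIU] at hxB
      exact absurd (hδ x hxB) (not_lt.mpr hx)
  -- any two nonempty T-subsets of B₀ meet
  have hmeet : ∀ B C, B ∈ T → C ∈ T → B ⊆ B₀ → C ⊆ B₀ → B.Nonempty → C.Nonempty →
      (B ∩ C).Nonempty := by
    intro B C hBT hCT hBB hCB hBne hCne
    obtain ⟨a, haγ, ha⟩ := htail B hBT hBB hBne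
    obtain ⟨a', ha'γ, ha'⟩ := htail C hCT hCB hCne
    obtain ⟨x, hxB, hx⟩ := hcof B hBT hBB hBne (max a a') (max_lt haγ ha'γ)
    have hxγ : (x : Ordinal) < γ := hB₀γ x (hBB hxB)
    exact ⟨x, hxB, ha' x (le_trans (le_max_right _ _) hx) hxγ⟩
  -- B₀ is the desired atom
  refine ⟨B₀, hB₀T, hB₀S, Set.nonempty_iff_ne_empty.mp hB₀ne, ?_⟩
  intro B hBT hBB0
  by_cases hBe : B = ∅
  · exact Or.inl hBe
  · right
    have hBne' : B.Nonempty := Set.nonempty_iff_ne_empty.mpr hBe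
    have hDT : B₀ ∩ Bᶜ ∈ T := hinter _ hB₀T _ (hcompl _ hBT)
    by_cases hDne : (B₀ ∩ Bᶜ).Nonempty
    · obtain ⟨x, hx1, hx2⟩ :=
        hmeet B (B₀ ∩ Bᶜ) hBT hDT hBB0 Set.inter_subset_left hBne' hDne
      exact absurd hx1 hx2.2
    · have hsub' : B₀ ⊆ B := by
        intro x hx
        by_contra hxB
        exact hDne ⟨x, hx, hxB⟩
      exact Set.Subset.antisymm hBB0 hsub'
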